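/- arXiv:1411.2389 — 2 statements merged into one kernel-verified Lean document; each statement's English description precedes it below -/
import Mathlib

section
/- For odd m ≥ 3, the Type II Chebyshev filter bank does not achieve perfect reconstruction: with A(z) = (√2/(m+1)) ∑_{i=0}^m z^{−i} and B(z) = (√2/(m+1)) ∑_{i=0}^m (−1)^i z^{−i}, the Laurent polynomial A(z)² − B(z)² is not of the form 2 z^{−l} for any integer l. -/
open Finset

theorem chebII_no_perfect_reconstruction (m : ℕ) (hm : Odd m) (hm3 : 3 ≤ m) :
    ¬ ∃ l : ℤ, ∀ z : ℂ, z ≠ 0 →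
      ((Real.sqrt 2 / (m + 1)) * ∑ i ∈ range (m + 1), z ^ (-(i : ℤ))) ^ 2 -
        ((Real.sqrt 2 / (m + 1)) * ∑ i ∈ range (m + 1), (-1 : ℂ) ^ i * z ^ (-(i : ℤ))) ^ 2
        = 2 * z ^ (-l) := by
  rintro ⟨l, h⟩
  obtain ⟨k, hk⟩ := hm
  have hI := h Complex.I Complex.I_ne_zero
  have hIsq : (Complex.I) ^ 2 = -1 := Complex.I_sq
  have hne1 : -Complex.I - 1 ≠ 0 := by simp [Complex.ext_iff]
  have hne2 : Complex.I - 1 ≠ 0 := by simp [Complex.ext_iff]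
  have h1 : ∀ i : ℕ, (Complex.I) ^ (-(i:ℤ)) = (-Complex.I) ^ i := by
    intro i
    rw [zpow_neg, zpow_natCast, ← inv_pow, Complex.inv_I]
  have hnI : (-Complex.I) ≠ 1 := by simp [Complex.ext_iff]
  have hII : Complex.I ≠ 1 := by simp [Complex.ext_iff]
  have hexp : 2*k+1+1 = 2*(k+1) := by ring
  have hsumA : ∑ i ∈ range (m+1), Complex.I ^ (-(i:ℤ))
      = ((-1:ℂ)^(k+1) - 1)/(-Complex.I - 1) := by
    simp only [h1]
    rw [geom_sum_eq hnI]
    congr 1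
    rw [hk, hexp, pow_mul, neg_sq, hIsq]
  have hsumB : ∑ i ∈ range (m+1), (-1:ℂ) ^ i * Complex.I ^ (-(i:ℤ))
      = ((-1:ℂ)^(k+1) - 1)/(Complex.I - 1) := by
    have h3 : ∀ i : ℕ, (-1:ℂ) ^ i * Complex.I ^ (-(i:ℤ)) = Complex.I ^ i := by
      intro i
      rw [h1, ← mul_pow]
      norm_num
    simp only [h3]
    rw [geom_sum_eq hII]
    congr 1
    rw [hk, hexp, pow_mul, hIsq]
  rw [hsumA, hsumB] at hI
  rcases Nat.even_or_odd (k+1) with he | ho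
  · rw [he.neg_one_pow] at hI
    simp only [sub_self, zero_div, mul_zero, ne_eq, zero_pow, sub_zero] at hI
    have hne : (2 : ℂ) * Complex.I ^ (-l) ≠ 0 :=
      mul_ne_zero (by norm_num) (zpow_ne_zero _ Complex.I_ne_zero)
    rw [← hI] at hne
    simp at hne
  · rw [ho.neg_one_pow] at hI
    have e1 : ((-1:ℂ)-1)/(-Complex.I-1) = 1 - Complex.I := by
      rw [div_eq_iff hne1]
      linear_combination (-1 : ℂ) * Complex.I_sq
    have e2 : ((-1:ℂ)-1)/(Complex.I-1) = 1 + Complex.I := by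
      rw [div_eq_iff hne2]
      linear_combination (-1 : ℂ) * Complex.I_sq
    rw [e1, e2] at hI
    have hlhs : ((↑(Real.sqrt 2) / ((m:ℂ) + 1)) * (1 - Complex.I)) ^ 2 -
        ((↑(Real.sqrt 2) / ((m:ℂ) + 1)) * (1 + Complex.I)) ^ 2
        = (↑(Real.sqrt 2) / ((m:ℂ) + 1))^2 * (-4 * Complex.I) := by ring
    rw [hlhs] at hI
    have habs := congrArg norm hI
    have hr2 : (0:ℝ) ≤ Real.sqrt 2 := Real.sqrt_nonneg 2
    have hm1 : (0:ℝ) < (m:ℝ) + 1 := by positivity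
    have hc : ‖(↑(Real.sqrt 2) / ((m:ℂ) + 1) : ℂ)‖ = Real.sqrt 2 / ((m:ℝ) + 1) := by
      rw [norm_div, Complex.norm_real, Real.norm_eq_abs, abs_of_nonneg hr2]
      congr 1
      have h4 : ((m:ℂ) + 1) = ((((m:ℝ)+1) : ℝ) : ℂ) := by push_cast; ring
      rw [h4, Complex.norm_real, Real.norm_eq_abs, abs_of_pos hm1]
    have hB : ‖(-4 * Complex.I : ℂ)‖ = 4 := by
      rw [norm_mul, Complex.norm_I, mul_one]
      norm_num
    have hC : ‖(2 * Complex.I ^ (-l) : ℂ)‖ = 2 := by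
      rw [norm_mul, norm_zpow, Complex.norm_I, one_zpow, mul_one]
      norm_num
    rw [norm_mul, norm_pow, hc, hB, hC] at habs
    have hsq : Real.sqrt 2 ^ 2 = 2 := Real.sq_sqrt (by norm_num)
    have hm3' : (3:ℝ) ≤ (m:ℝ) := by exact_mod_cast hm3
    rw [div_pow, hsq] at habs
    have h16 : ((m:ℝ)+1)^2 ≥ 16 := by nlinarith
    have hpos : (0:ℝ) < ((m:ℝ)+1)^2 := by positivity
    have h8 : (8:ℝ) = 2 * ((m:ℝ)+1)^2 := by
      field_simp at habs
      linarith
    nlinarith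
end

section
/- The 5×5 matrix T = (1/2)·[[0,1,0,0,0],[2,0,0,1,0],[0,0,2,0,0],[0,1,0,0,2],[0,0,0,1,0]] has 1 as an eigenvalue of algebraic multiplicity two; hence it fails the condition that 1 be a simple eigenvalue with all other eigenvalues strictly inside the unit circle. -/
open Polynomial

/-- The centered 5×5 submatrix of `(↓2)·2·H·Hᵀ` for the Type I Chebyshev filter
`h = (1/2)[1,0,0,1]` (`m = 3`). -/
noncomputable def chebIT5 : Matrix (Fin 5) (Fin 5) ℝ :=
  (1 / 2 : ℝ) • !![0, 1, 0, 0, 0;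
                   2, 0, 0, 1, 0;
                   0, 0, 2, 0, 0;
                   0, 1, 0, 0, 2;
                   0, 0, 0, 1, 0]

set_option maxHeartbeats 2000000 in
lemma chebIT5_charpoly :
    chebIT5.charpoly = (X-1)^2*(X+1)*(X - C (1/2:ℝ))*(X + C (1/2:ℝ)) := by
  rw [Matrix.charpoly]
  simp only [Matrix.det_succ_row_zero, Fin.sum_univ_succ, Fin.sum_univ_zero,
    Matrix.charmatrix_apply, Matrix.one_apply, Matrix.submatrix_apply, Fin.succAbove,
    chebIT5, Matrix.smul_apply, Matrix.cons_val', Matrix.cons_val_zero,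
    Matrix.cons_val_one, Matrix.head_cons, Matrix.head_fin_const,
    Matrix.empty_val', Matrix.cons_val_fin_one]
  norm_num [Fin.ext_iff, Fin.lt_def]
  simp [Matrix.vecHead, Matrix.vecTail, one_div, map_zero]
  have h : (C ((2:ℝ)⁻¹)) * 2 = 1 := by
    rw [show (2:ℝ[X]) = C 2 from (map_ofNat C 2).symm, ← C_mul]; norm_num
  have h' : (C ((2:ℝ)⁻¹)) * C 2 = 1 := by
    rw [← C_mul]; norm_num
  linear_combination (X * C 2⁻¹ ^ 2 + X ^ 2 * C 2⁻¹ + X ^ 2 * C 2⁻¹ ^ 2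
    + X ^ 2 * C 2⁻¹ * (2 + (C 2⁻¹ * C 2 - 1)) - X ^ 3 * C 2⁻¹ - X ^ 4
    - C 2⁻¹ ^ 2 * (2 + (C 2⁻¹ * C 2 - 1))) * h' + (X^2 - X^3) * h

lemma chebIT5_rm : chebIT5.charpoly.rootMultiplicity 1 = 2 := by
  rw [chebIT5_charpoly]
  have h1 : ((X:ℝ[X]) - 1)^2 ≠ 0 := pow_ne_zero _ (X_sub_C_ne_zero 1)
  have h2 : ((X:ℝ[X]) + 1) ≠ 0 := by
    intro h; have := congrArg (eval 0) h; simp at this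
  have h3 : ((X:ℝ[X]) - C (1/2)) ≠ 0 := X_sub_C_ne_zero _
  have h4 : ((X:ℝ[X]) + C (1/2)) ≠ 0 := by
    intro h; have := congrArg (eval 0) h; simp at this
  rw [rootMultiplicity_mul (mul_ne_zero (mul_ne_zero (mul_ne_zero h1 h2) h3) h4),
    rootMultiplicity_mul (mul_ne_zero (mul_ne_zero h1 h2) h3),
    rootMultiplicity_mul (mul_ne_zero h1 h2)]
  have e1 : (((X:ℝ[X]) - 1)^2).rootMultiplicity 1 = 2 := by
    simpa using rootMultiplicity_X_sub_C_pow (1:ℝ) 2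
  have e2 : ((X:ℝ[X]) + 1).rootMultiplicity 1 = 0 :=
    rootMultiplicity_eq_zero (by simp [IsRoot])
  have e3 : ((X:ℝ[X]) - C (1/2)).rootMultiplicity 1 = 0 :=
    rootMultiplicity_eq_zero (by simp [IsRoot]; norm_num)
  have e4 : ((X:ℝ[X]) + C (1/2)).rootMultiplicity 1 = 0 :=
    rootMultiplicity_eq_zero (by simp [IsRoot]; norm_num)
  rw [e1, e2, e3, e4]

theorem chebIT5_eigenvalue_one_double :
    chebIT5.charpoly.rootMultiplicity 1 = 2 ∧
    ¬ (chebIT5.charpoly.rootMultiplicity 1 = 1 ∧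
        ∀ lam : ℝ, chebIT5.charpoly.IsRoot lam → lam ≠ 1 → |lam| < 1) := by
  refine ⟨chebIT5_rm, fun h => ?_⟩
  have := chebIT5_rm
  omega
end
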